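/- Let I ⊆ ℝ be an interval and let x, v : I → ℝ³ be differentiable curves such that x′(t) = α(t)·v(t) and v′(t) = β(t)·x(t) for all t ∈ I, where α, β : I → ℝ. Then the function t ↦ |x(t)|²·|v(t)|² − (x(t)·v(t))² is constant on I. -/

import Mathlib

open Set
open scoped RealInnerProductSpace

private lemma key_deriv (I : Set ℝ)
    (x v : ℝ → EuclideanSpace ℝ (Fin 3)) (α β : ℝ → ℝ)
    (hx : ∀ t ∈ I, HasDerivAt x (α t • v t) t)
    (hv : ∀ t ∈ I, HasDerivAt v (β t • x t) t) :
    ∀ t ∈ I, HasDerivAt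
      (fun t => ⟪x t, x t⟫ * ⟪v t, v t⟫ - ⟪x t, v t⟫ ^ 2) 0 t := by
  intro t ht
  have h1 := ((hx t ht).inner (𝕜 := ℝ) (hx t ht)).mul ((hv t ht).inner (𝕜 := ℝ) (hv t ht))
  have h2 := ((hx t ht).inner (𝕜 := ℝ) (hv t ht)).pow 2
  have h := h1.sub h2
  refine h.congr_deriv ?_
  simp only [real_inner_smul_left, real_inner_smul_right, pow_two]
  have hc : ⟪x t, v t⟫ = ⟪v t, x t⟫ := real_inner_comm _ _
  ring_nf
  rw [hc]
  ring

/-- Conservation of the squared angular momentum `L = |x|²|v|² − (x·v)²` along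
characteristics of a radial force field: if `x′ = α·v` and `v′ = β·x` on an interval `I`,
then `t ↦ |x(t)|²|v(t)|² − (x(t)·v(t))²` is constant on `I`. -/
theorem angular_momentum_conserved (I : Set ℝ) (hI : I.OrdConnected)
    (x v : ℝ → EuclideanSpace ℝ (Fin 3)) (α β : ℝ → ℝ)
    (hx : ∀ t ∈ I, HasDerivAt x (α t • v t) t)
    (hv : ∀ t ∈ I, HasDerivAt v (β t • x t) t) :
    ∀ s ∈ I, ∀ t ∈ I,
      ‖x s‖ ^ 2 * ‖v s‖ ^ 2 - ⟪x s, v s⟫ ^ 2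
        = ‖x t‖ ^ 2 * ‖v t‖ ^ 2 - ⟪x t, v t⟫ ^ 2 := by
  set f : ℝ → ℝ := fun t => ⟪x t, x t⟫ * ⟪v t, v t⟫ - ⟪x t, v t⟫ ^ 2 with hf
  have hkey : ∀ a ∈ I, ∀ b ∈ I, a ≤ b → f a = f b := by
    intro a ha b hb hab
    have hsub : Icc a b ⊆ I := hI.out ha hb
    exact (constant_of_has_deriv_right_zero
      (fun t ht => ((key_deriv I x v α β hx hv t (hsub ht)).continuousAt).continuousWithinAt)
      (fun t ht => ((key_deriv I x v α β hx hv t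
        (hsub (mem_Icc_of_Ico ht))).hasDerivWithinAt)) b (right_mem_Icc.2 hab)).symm
  have hfe : ∀ t, f t = ‖x t‖ ^ 2 * ‖v t‖ ^ 2 - ⟪x t, v t⟫ ^ 2 := by
    intro t
    simp only [hf, real_inner_self_eq_norm_sq]
  intro s hs t ht
  rw [← hfe, ← hfe]
  rcases le_total s t with h | h
  · exact hkey s hs t ht h
  · exact (hkey t ht s hs h).symm
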